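/- arXiv:2208.13305 — 2 statements merged into one kernel-verified Lean document; each statement's English description precedes it below -/
import Mathlib

section
/- Let S ⊆ ℝ^D and let U_S be the closure of the set of unit secants {(x-x')/‖x-x'‖₂ : x,x' ∈ S, x ≠ x'}. Fix δ > 0. Then there exists a finite set S₁ ⊆ ℝ^D with |S₁| ≤ 2·N(U_S, ‖·‖₂, δ) (where N denotes the covering number by δ-balls) such that any matrix A ∈ ℝ^{d×D} that is a ρ-JL embedding of S₁ is also a (ρ + 2‖A‖δ)-JL embedding of S, where ‖A‖ is the operator norm of A. -/
theorem stmt_6 (D d : ℕ) (δ : ℝ) (hδ : 0 < δ)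
    (S : Set (EuclideanSpace ℝ (Fin D)))
    (F : Finset (EuclideanSpace ℝ (Fin D)))
    (hcover : closure {u : EuclideanSpace ℝ (Fin D) |
        ∃ x ∈ S, ∃ x' ∈ S, x ≠ x' ∧ u = ‖x - x'‖⁻¹ • (x - x')}
      ⊆ ⋃ c ∈ F, Metric.closedBall c δ) :
    ∃ S₁ : Finset (EuclideanSpace ℝ (Fin D)), S₁.card ≤ 2 * F.card ∧
      ∀ (ρ : ℝ) (A : EuclideanSpace ℝ (Fin D) →L[ℝ] EuclideanSpace ℝ (Fin d)),
        (∀ x ∈ S₁, ∀ x' ∈ S₁,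
          (1 - ρ) * ‖x - x'‖ ≤ ‖A x - A x'‖ ∧ ‖A x - A x'‖ ≤ (1 + ρ) * ‖x - x'‖) →
        (∀ x ∈ S, ∀ x' ∈ S,
          (1 - (ρ + 2 * ‖A‖ * δ)) * ‖x - x'‖ ≤ ‖A x - A x'‖ ∧
            ‖A x - A x'‖ ≤ (1 + (ρ + 2 * ‖A‖ * δ)) * ‖x - x'‖) := by
  classical
  let P : EuclideanSpace ℝ (Fin D) → Prop := fun c =>
    ∃ q : EuclideanSpace ℝ (Fin D) × EuclideanSpace ℝ (Fin D),
      q.1 ∈ S ∧ q.2 ∈ S ∧ q.1 ≠ q.2 ∧ dist (‖q.1 - q.2‖⁻¹ • (q.1 - q.2)) c ≤ δ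
  let pair : EuclideanSpace ℝ (Fin D) → Finset (EuclideanSpace ℝ (Fin D)) :=
    fun c => if h : P c then {h.choose.1, h.choose.2} else ∅
  refine ⟨F.biUnion pair, ?_, ?_⟩
  · calc (F.biUnion pair).card ≤ ∑ c ∈ F, (pair c).card := Finset.card_biUnion_le
      _ ≤ ∑ _c ∈ F, 2 := Finset.sum_le_sum (fun c _ => by
            dsimp only [pair]; split
            · exact (Finset.card_insert_le _ _).trans (by simp)
            · simp)
      _ = 2 * F.card := by rw [Finset.sum_const, smul_eq_mul, mul_comm]
  · intro ρ A hJL x hx x' hx'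
    rcases eq_or_ne x x' with rfl | hne
    · simp
    · have hxx : (0:ℝ) < ‖x - x'‖ := by rwa [norm_pos_iff, sub_ne_zero]
      set u := ‖x - x'‖⁻¹ • (x - x') with hu
      have huSec : u ∈ closure {u : EuclideanSpace ℝ (Fin D) |
          ∃ x ∈ S, ∃ x' ∈ S, x ≠ x' ∧ u = ‖x - x'‖⁻¹ • (x - x')} :=
        subset_closure ⟨x, hx, x', hx', hne, rfl⟩
      have hmem := hcover huSec
      rw [Set.mem_iUnion₂] at hmem
      obtain ⟨c, hcF, hc⟩ := hmem
      have hPc : P c := ⟨(x, x'), hx, hx', hne, Metric.mem_closedBall.mp hc⟩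
      obtain ⟨hf, hg, hfg, hdist⟩ := hPc.choose_spec
      set f := hPc.choose.1 with hfdef
      set g := hPc.choose.2 with hgdef
      have hfS₁ : f ∈ F.biUnion pair := Finset.mem_biUnion.mpr ⟨c, hcF, by
        simp [pair, dif_pos hPc, ← hfdef]⟩
      have hgS₁ : g ∈ F.biUnion pair := Finset.mem_biUnion.mpr ⟨c, hcF, by
        simp [pair, dif_pos hPc, ← hgdef]⟩
      obtain ⟨h1, h2⟩ := hJL f hfS₁ g hgS₁
      have hfgpos : (0:ℝ) < ‖f - g‖ := by rwa [norm_pos_iff, sub_ne_zero]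
      set v := ‖f - g‖⁻¹ • (f - g) with hv
      have hAv : ‖A v‖ = ‖f - g‖⁻¹ * ‖A f - A g‖ := by
        rw [hv, map_smul, norm_smul, norm_inv, norm_norm, map_sub]
      have hAv_ub : ‖A v‖ ≤ 1 + ρ := by
        rw [hAv, inv_mul_le_iff₀ hfgpos]
        linarith [h2]
      have hAv_lb : 1 - ρ ≤ ‖A v‖ := by
        rw [hAv, le_inv_mul_iff₀ hfgpos]
        linarith [h1]
      have huv : ‖u - v‖ ≤ 2 * δ := by
        have t := dist_triangle u c v
        have h2' : dist c v ≤ δ := by rw [dist_comm]; exact hdist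
        have h1' : dist u c ≤ δ := Metric.mem_closedBall.mp hc
        rw [dist_eq_norm] at t
        linarith
      have hA2 : ‖A u - A v‖ ≤ ‖A‖ * (2 * δ) := by
        rw [← map_sub]
        exact (A.le_opNorm _).trans (mul_le_mul_of_nonneg_left huv (norm_nonneg _))
      have hAu_ub : ‖A u‖ ≤ 1 + ρ + 2 * ‖A‖ * δ := by
        have := norm_sub_norm_le (A u) (A v)
        linarith
      have hAu_lb : 1 - ρ - 2 * ‖A‖ * δ ≤ ‖A u‖ := by
        have := norm_sub_norm_le (A v) (A u)
        rw [norm_sub_rev] at this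
        linarith
      have hAxu : ‖A x - A x'‖ = ‖x - x'‖ * ‖A u‖ := by
        rw [hu, map_smul, norm_smul, norm_inv, norm_norm, map_sub, ← mul_assoc,
          mul_inv_cancel₀ hxx.ne', one_mul]
      constructor
      · rw [hAxu]; nlinarith [hAu_lb, hxx]
      · rw [hAxu]; nlinarith [hAu_ub, hxx]
end

section
/- Let d, N ≥ 1 be integers and M > 0. Define φ : ℝ^d → [0,1] by φ(z) = max{1 + min{z₁,…,z_d,0} − max{z₁,…,z_d,0}, 0}. Then the family {y ↦ φ(Ny/M − n)}_{n ∈ {−N,…,N}^d} forms a partition of unity on [−M,M]^d: for every y ∈ [−M,M]^d, Σ_{n ∈ {−N,…,N}^d} φ(Ny/M − n) = 1. -/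
/-- The "spike" function φ(z) = max{1 + min{z₁,…,z_d,0} − max{z₁,…,z_d,0}, 0},
where the min and max are taken over the coordinates of `z` together with `0`. -/
noncomputable def spike (d : ℕ) (z : Fin d → ℝ) : ℝ :=
  max (1 + Finset.univ.inf' Finset.univ_nonempty (fun o : Option (Fin d) => o.elim 0 z)
        - Finset.univ.sup' Finset.univ_nonempty (fun o : Option (Fin d) => o.elim 0 z)) 0

open Finset MeasureTheory

lemma my_spike_nonneg (d : ℕ) (z : Fin d → ℝ) : 0 ≤ spike d z :=
  le_max_right _ _

lemma my_sup'_neg {α : Type*} (s : Finset α) (H : s.Nonempty) (f : α → ℝ) :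
    s.sup' H (fun x => -f x) = - s.inf' H f := by
  apply le_antisymm
  · rw [Finset.sup'_le_iff]
    exact fun b hb => neg_le_neg (Finset.inf'_le _ hb)
  · obtain ⟨c, hc, hceq⟩ := Finset.exists_mem_eq_inf' H f
    rw [hceq]
    exact Finset.le_sup' (fun x => -f x) hc

lemma my_inf'_const_sub {α : Type*} (s : Finset α) (H : s.Nonempty) (f : α → ℝ) (c : ℝ) :
    s.inf' H (fun x => c - f x) = c - s.sup' H f := by
  apply le_antisymm
  · obtain ⟨q, hq, hqeq⟩ := Finset.exists_mem_eq_sup' H f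
    rw [hqeq]
    exact Finset.inf'_le _ hq
  · rw [Finset.le_inf'_iff]
    exact fun q hq => sub_le_sub_left (Finset.le_sup' f hq) c

lemma my_key (d N : ℕ) (x : Fin d → ℝ) (hx : ∀ i, |x i| ≤ N) :
    ∑ n ∈ Fintype.piFinset (fun _ : Fin d => Finset.Icc (-(N : ℤ)) (N : ℤ)),
      spike d (fun i => x i - (n i : ℝ)) = 1 := by
  classical
  set grid := Fintype.piFinset (fun _ : Fin d => Finset.Icc (-(N : ℤ)) (N : ℤ)) with hgrid
  set a : (Fin d → ℤ) → ℝ := fun n =>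
    Finset.univ.sup' Finset.univ_nonempty
      (fun o : Option (Fin d) => o.elim 0 (fun i => (n i : ℝ) - x i)) with ha
  set b : (Fin d → ℤ) → ℝ := fun n =>
    Finset.univ.inf' Finset.univ_nonempty
      (fun o : Option (Fin d) => o.elim 1 (fun i => (n i : ℝ) - x i + 1)) with hb
  set A : (Fin d → ℤ) → Set ℝ := fun n => Set.Ico (a n) (b n) with hA
  -- membership characterisation
  have hmem : ∀ n t, t ∈ A n ↔
      (0 ≤ t ∧ t < 1) ∧ ∀ i, (n i : ℝ) ≤ x i + t ∧ x i + t < (n i : ℝ) + 1 := by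
    intro n t
    simp only [hA, Set.mem_Ico, ha, hb, Finset.sup'_le_iff, Finset.lt_inf'_iff]
    constructor
    · rintro ⟨h1, h2⟩
      refine ⟨⟨by simpa using h1 none (mem_univ _), by simpa using h2 none (mem_univ _)⟩,
        fun i => ⟨?_, ?_⟩⟩
      · have := h1 (some i) (mem_univ _); simp only [Option.elim] at this; linarith
      · have := h2 (some i) (mem_univ _); simp only [Option.elim] at this; linarith
    · rintro ⟨⟨h0, h1⟩, h2⟩
      constructor
      · rintro (_|i) _
        · exact h0
        · have := (h2 i).1; simp only [Option.elim]; linarith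
      · rintro (_|i) _
        · exact h1
        · have := (h2 i).2; simp only [Option.elim]; linarith
  -- spike evaluation
  have hspike : ∀ n : Fin d → ℤ,
      spike d (fun i => x i - (n i : ℝ)) = max (b n - a n) 0 := by
    intro n
    have e1 : a n = - Finset.univ.inf' Finset.univ_nonempty
        (fun o : Option (Fin d) => o.elim 0 (fun i => x i - (n i : ℝ))) := by
      show Finset.univ.sup' Finset.univ_nonempty
        (fun o : Option (Fin d) => o.elim 0 (fun i => (n i : ℝ) - x i)) = _
      rw [← my_sup'_neg]
      congr 1
      funext o
      cases o <;> simp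
    have e2 : b n = 1 - Finset.univ.sup' Finset.univ_nonempty
        (fun o : Option (Fin d) => o.elim 0 (fun i => x i - (n i : ℝ))) := by
      show Finset.univ.inf' Finset.univ_nonempty
        (fun o : Option (Fin d) => o.elim 1 (fun i => (n i : ℝ) - x i + 1)) = _
      rw [← my_inf'_const_sub]
      congr 1
      funext o
      cases o <;> simp <;> ring
    rw [spike, e1, e2]
    ring_nf
  -- volume of A n
  have hvol : ∀ n : Fin d → ℤ,
      volume (A n) = ENNReal.ofReal (spike d (fun i => x i - (n i : ℝ))) := by
    intro n
    rw [hA, Real.volume_Ico, hspike n]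
    rcases le_total (b n - a n) 0 with h | h
    · rw [max_eq_right h, ENNReal.ofReal_eq_zero.2 h, ENNReal.ofReal_zero]
    · rw [max_eq_left h]
  -- disjointness
  have hdisj : (grid : Set (Fin d → ℤ)).PairwiseDisjoint A := by
    intro n _ m _ hnm
    refine Set.disjoint_left.2 fun t htn htm => hnm ?_
    funext i
    have h1 := ((hmem n t).1 htn).2 i
    have h2 := ((hmem m t).1 htm).2 i
    have hnm1 : (n i : ℝ) < (m i : ℝ) + 1 := lt_of_le_of_lt h1.1 h2.2
    have hmn1 : (m i : ℝ) < (n i : ℝ) + 1 := lt_of_le_of_lt h2.1 h1.2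
    have : n i < m i + 1 := by exact_mod_cast hnm1
    have : m i < n i + 1 := by exact_mod_cast hmn1
    omega
  -- coverage
  have hcover : ⋃ n ∈ grid, A n = Set.Ico (0 : ℝ) 1 := by
    apply Set.Subset.antisymm
    · intro t ht
      simp only [Set.mem_iUnion] at ht
      obtain ⟨n, _, htn⟩ := ht
      have := ((hmem n t).1 htn).1
      exact ⟨this.1, this.2⟩
    · intro t ht
      obtain ⟨ht0, ht1⟩ := ht
      have hng : (fun i => ⌊x i + t⌋) ∈ grid := by
        rw [hgrid, Fintype.mem_piFinset]
        intro i
        rw [Finset.mem_Icc]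
        constructor
        · rw [Int.le_floor]
          push_cast
          have := abs_le.1 (hx i)
          linarith [this.1]
        · have hlt : ⌊x i + t⌋ < (N : ℤ) + 1 := by
            rw [Int.floor_lt]
            push_cast
            have := abs_le.1 (hx i)
            linarith [this.2]
          omega
      have hnt : t ∈ A (fun i => ⌊x i + t⌋) := by
        rw [hmem]
        exact ⟨⟨ht0, ht1⟩, fun i => ⟨Int.floor_le _, Int.lt_floor_add_one _⟩⟩
      exact Set.mem_biUnion hng hnt
  -- put everything together
  have hsum : ∑ n ∈ grid, volume (A n) = 1 := by
    rw [← measure_biUnion_finset hdisj (fun n _ => measurableSet_Ico), hcover,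
      Real.volume_Ico]
    norm_num
  have h1 : ENNReal.ofReal (∑ n ∈ grid, spike d (fun i => x i - (n i : ℝ))) = 1 := by
    rw [ENNReal.ofReal_sum_of_nonneg (fun n _ => my_spike_nonneg _ _)]
    simp_rw [← hvol]
    exact hsum
  have h2 := congrArg ENNReal.toReal h1
  rwa [ENNReal.toReal_ofReal (Finset.sum_nonneg fun n _ => my_spike_nonneg _ _),
    ENNReal.toReal_one] at h2

theorem stmt_11 (d N : ℕ) (hd : 0 < d) (hN : 0 < N) (M : ℝ) (hM : 0 < M)
    (y : Fin d → ℝ) (hy : ∀ i, |y i| ≤ M) :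
    ∑ n ∈ Fintype.piFinset (fun _ : Fin d => Finset.Icc (-(N : ℤ)) (N : ℤ)),
      spike d (fun i => N * y i / M - (n i : ℝ)) = 1 := by
  have hx : ∀ i, |(N : ℝ) * y i / M| ≤ N := by
    intro i
    rw [abs_div, abs_of_pos hM, div_le_iff₀ hM, abs_mul,
      abs_of_nonneg (by positivity : (0:ℝ) ≤ (N : ℝ))]
    exact mul_le_mul_of_nonneg_left (hy i) (by positivity)
  exact my_key d N (fun i => N * y i / M) hx
end
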